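/- Any exor game can be won with certainty by classical players sharing PR nonlocal boxes pairwise: if each player i holds bits x_i and y_i (functions of its input), and the winning condition is ⊕_i out_i = (⊕_i x_i)·(⊕_i y_i) ⊕ c for a constant c depending on the inputs known to each player's share, then using one PR box between each pair (i,j) to compute shares of x_i·y_j, the players can output bits whose XOR equals (⊕_i x_i)·(⊕_i y_i). Concretely: x·y = ⊕_{i,j} x_i·y_j when x = ⊕_i x_i and y = ⊕_i y_i, and each cross term x_i·y_j (i ≠ j) can be obtained as the XOR of two locally-computable bits via a PR box. -/
import Mathlib


/-- The algebraic core of winning any exor game with pairwise PR nonlocal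
boxes: over GF(2), `(⊕_i x_i)·(⊕_j y_j) = ⊕_{i,j} x_i·y_j`; and if for each
pair `i ≠ j` a PR box provides shares `u i j` (held by `i`) and `v i j`
(held by `j`) with `u i j + v i j = x i · y j`, then the XOR of the players'
locally computable outputs `x i · y i + Σ_{j ≠ i} (u i j + v j i)` equals
the product `(⊕_i x_i)·(⊕_j y_j)`. -/
theorem exor_game_pr_boxes (m : ℕ) (x y : Fin m → ZMod 2)
    (u v : Fin m → Fin m → ZMod 2)
    (huv : ∀ i j, i ≠ j → u i j + v i j = x i * y j) :
    ((∑ i, x i) * (∑ j, y j) = ∑ i, ∑ j, x i * y j) ∧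
    (∑ i, (x i * y i + ∑ j ∈ Finset.univ.erase i, (u i j + v j i))
      = (∑ i, x i) * (∑ j, y j)) := by
  have h1 : (∑ i, x i) * (∑ j, y j) = ∑ i, ∑ j, x i * y j := by
    rw [Finset.sum_mul_sum]
  refine ⟨h1, ?_⟩
  rw [h1]
  rw [Finset.sum_add_distrib]
  have h2 : ∑ i, ∑ j ∈ Finset.univ.erase i, (u i j + v j i)
      = ∑ i, ∑ j ∈ Finset.univ.erase i, (x i * y j) := by
    have hsplit : ∀ (w : Fin m → Fin m → ZMod 2),
        ∑ i, ∑ j ∈ Finset.univ.erase i, (u i j + w i j)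
          = ∑ i, ∑ j ∈ Finset.univ.erase i, u i j
            + ∑ i, ∑ j ∈ Finset.univ.erase i, w i j := by
      intro w
      rw [← Finset.sum_add_distrib]
      congr 1; ext i
      rw [← Finset.sum_add_distrib]
    have hswap : ∑ i, ∑ j ∈ Finset.univ.erase i, v j i
        = ∑ i, ∑ j ∈ Finset.univ.erase i, v i j := by
      rw [Finset.sum_comm' (t' := Finset.univ) (s' := fun j => Finset.univ.erase j)]
      intro i j
      simp [eq_comm, and_comm]
    rw [hsplit, hswap, ← hsplit]
    apply Finset.sum_congr rfl
    intro i _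
    apply Finset.sum_congr rfl
    intro j hj
    exact huv i j (Finset.ne_of_mem_erase hj).symm
  rw [h2, ← Finset.sum_add_distrib]
  apply Finset.sum_congr rfl
  intro i _
  rw [← Finset.add_sum_erase _ _ (Finset.mem_univ i)]
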